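/- arXiv:2203.16409 — 3 statements merged into one kernel-verified Lean document; each statement's English description precedes it below -/
import Mathlib

section
/- If every vertex of a perturbed polygon P with vertices b_0,...,b_{n-1} satisfies |b_i - a_i*| ≤ (1/4) sin²(π/n), where a_i* are the vertices of the regular n-gon inscribed in the unit circle, then every interior angle of P is at most ((n-2)π/n) + 2 arcsin((1/4) sin(π/n)), which is strictly less than π; in particular P is convex. -/
set_option maxHeartbeats 1000000
open Real InnerProductGeometry
variable {V : Type*} [NormedAddCommGroup V] [InnerProductSpace ℝ V]

lemma key_ineq (x y z : V) (hx : ‖x‖ = 1) (hy : ‖y‖ = 1) (hz : ‖z‖ = 1) :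
    (inner ℝ x y : ℝ) * inner ℝ y z -
      Real.sqrt (1 - (inner ℝ x y : ℝ) ^ 2) * Real.sqrt (1 - (inner ℝ y z : ℝ) ^ 2)
      ≤ (inner ℝ x z : ℝ) := by
  set p := x - (inner ℝ x y : ℝ) • y with hp
  set q := z - (inner ℝ y z : ℝ) • y with hq
  have hpn : ‖p‖ ^ 2 = 1 - (inner ℝ x y : ℝ) ^ 2 := by
    rw [hp, norm_sub_sq_real, real_inner_smul_right, norm_smul]
    simp [hx, hy, real_inner_self_eq_norm_sq, abs_mul_abs_self, mul_pow, sq_abs]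
    ring
  have hqn : ‖q‖ ^ 2 = 1 - (inner ℝ y z : ℝ) ^ 2 := by
    rw [hq, norm_sub_sq_real, real_inner_smul_right, norm_smul]
    have : (inner ℝ z y : ℝ) = inner ℝ y z := real_inner_comm y z
    simp [hz, hy, this, mul_pow, sq_abs]
    ring
  have hsp : Real.sqrt (1 - (inner ℝ x y : ℝ) ^ 2) = ‖p‖ := by
    rw [← hpn, Real.sqrt_sq (norm_nonneg p)]
  have hsq : Real.sqrt (1 - (inner ℝ y z : ℝ) ^ 2) = ‖q‖ := by
    rw [← hqn, Real.sqrt_sq (norm_nonneg q)]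
  have hpq : (inner ℝ p q : ℝ) = inner ℝ x z - (inner ℝ x y : ℝ) * inner ℝ y z := by
    rw [hp, hq]
    simp [inner_sub_left, inner_sub_right, real_inner_smul_left, real_inner_smul_right,
      real_inner_self_eq_norm_sq, hy, real_inner_comm y x, real_inner_comm z y]
    try ring
  have := neg_abs_le (inner ℝ p q : ℝ)
  have habs := abs_real_inner_le_norm p q
  rw [hsp, hsq]
  nlinarith [hpq]

lemma angle_triangle' (x y z : V) : angle x z ≤ angle x y + angle y z := by
  rcases eq_or_ne x 0 with rfl | hx
  · rw [angle_zero_left, angle_zero_left]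
    linarith [angle_nonneg y z]
  rcases eq_or_ne z 0 with rfl | hz
  · rw [angle_zero_right, angle_zero_right]
    linarith [angle_nonneg x y]
  rcases eq_or_ne y 0 with rfl | hy
  · rw [angle_zero_right, angle_zero_left]
    linarith [angle_le_pi x z]
  -- normalize
  set x' : V := (‖x‖)⁻¹ • x with hx'
  set y' : V := (‖y‖)⁻¹ • y with hy'
  set z' : V := (‖z‖)⁻¹ • z with hz'
  have hxn : ‖x'‖ = 1 := norm_smul_inv_norm hx
  have hyn : ‖y'‖ = 1 := norm_smul_inv_norm hy
  have hzn : ‖z'‖ = 1 := norm_smul_inv_norm hz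
  have hxp : (0:ℝ) < (‖x‖)⁻¹ := inv_pos.2 (norm_pos_iff.2 hx)
  have hyp : (0:ℝ) < (‖y‖)⁻¹ := inv_pos.2 (norm_pos_iff.2 hy)
  have hzp : (0:ℝ) < (‖z‖)⁻¹ := inv_pos.2 (norm_pos_iff.2 hz)
  have e1 : angle x z = angle x' z' := by
    rw [hx', hz', angle_smul_left_of_pos _ _ hxp, angle_smul_right_of_pos _ _ hzp]
  have e2 : angle x y = angle x' y' := by
    rw [hx', hy', angle_smul_left_of_pos _ _ hxp, angle_smul_right_of_pos _ _ hyp]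
  have e3 : angle y z = angle y' z' := by
    rw [hy', hz', angle_smul_left_of_pos _ _ hyp, angle_smul_right_of_pos _ _ hzp]
  rw [e1, e2, e3]
  by_cases hpi : π ≤ angle x' y' + angle y' z'
  · exact (angle_le_pi x' z').trans hpi
  push_neg at hpi
  have h01 := angle_nonneg x' y'
  have h02 := angle_nonneg y' z'
  have h03 := angle_nonneg x' z'
  have h04 := angle_le_pi x' z'
  by_contra hlt
  push_neg at hlt
  have hc := Real.strictAntiOn_cos (Set.mem_Icc.2 ⟨by linarith, by linarith⟩)
    (Set.mem_Icc.2 ⟨h03, h04⟩) hlt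
  -- hc : cos (angle x' z') < cos (angle x' y' + angle y' z')
  have hcxz : cos (angle x' z') = inner ℝ x' z' := by
    rw [cos_angle, hxn, hzn]; norm_num
  have hcxy : cos (angle x' y') = inner ℝ x' y' := by
    rw [cos_angle, hxn, hyn]; norm_num
  have hcyz : cos (angle y' z') = inner ℝ y' z' := by
    rw [cos_angle, hyn, hzn]; norm_num
  have hsxy : sin (angle x' y') = Real.sqrt (1 - (inner ℝ x' y' : ℝ) ^ 2) := by
    rw [← hcxy]; exact Real.sin_eq_sqrt_one_sub_cos_sq h01 (angle_le_pi _ _)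
  have hsyz : sin (angle y' z') = Real.sqrt (1 - (inner ℝ y' z' : ℝ) ^ 2) := by
    rw [← hcyz]; exact Real.sin_eq_sqrt_one_sub_cos_sq h02 (angle_le_pi _ _)
  rw [Real.cos_add, hcxz, hcxy, hcyz, hsxy, hsyz] at hc
  have := key_ineq x' y' z' hxn hyn hzn
  linarith

lemma angle_perturb {u v : V} {d : ℝ} (h : ‖v - u‖ ≤ d) (hd : d < ‖u‖) :
    angle u v ≤ arcsin (d / ‖u‖) := by
  have hd0 : 0 ≤ d := (norm_nonneg _).trans h
  have hu : 0 < ‖u‖ := hd0.trans_lt hd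
  have hv : 0 < ‖v‖ := by
    have := norm_sub_norm_le u v
    rw [norm_sub_rev] at h
    linarith
  have hsq : ‖v‖ ^ 2 - 2 * (inner ℝ v u : ℝ) + ‖u‖ ^ 2 ≤ d ^ 2 := by
    have := pow_le_pow_left₀ (norm_nonneg (v - u)) h 2
    rwa [norm_sub_sq_real] at this
  have hivu : (inner ℝ v u : ℝ) = inner ℝ u v := real_inner_comm u v
  have htpos : 0 < (inner ℝ u v : ℝ) := by nlinarith
  have hc : cos (angle u v) = (inner ℝ u v : ℝ) / (‖u‖ * ‖v‖) := cos_angle u v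
  have hcos0 : 0 ≤ cos (angle u v) := by
    rw [hc]; positivity
  have hle2 : angle u v ≤ π / 2 := by
    by_contra hgt
    push_neg at hgt
    have := Real.strictAntiOn_cos (Set.mem_Icc.2 ⟨by positivity, by linarith [Real.pi_pos]⟩)
      (Set.mem_Icc.2 ⟨angle_nonneg u v, angle_le_pi u v⟩) hgt
    rw [Real.cos_pi_div_two] at this
    linarith
  have hsin : sin (angle u v) ≤ d / ‖u‖ := by
    have hs : sin (angle u v) = Real.sqrt (1 - cos (angle u v) ^ 2) :=
      Real.sin_eq_sqrt_one_sub_cos_sq (angle_nonneg u v) (angle_le_pi u v)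
    rw [hs, hc]
    rw [show d / ‖u‖ = Real.sqrt ((d / ‖u‖) ^ 2) from (Real.sqrt_sq (by positivity)).symm]
    apply Real.sqrt_le_sqrt
    have key : ‖u‖ ^ 2 * ‖v‖ ^ 2 - (inner ℝ u v : ℝ) ^ 2 ≤ d ^ 2 * ‖v‖ ^ 2 := by
      nlinarith [sq_nonneg (‖v‖ ^ 2 - (inner ℝ u v : ℝ)), sq_nonneg ‖v‖]
    rw [div_pow, div_pow]
    rw [show (1:ℝ) - (inner ℝ u v : ℝ) ^ 2 / (‖u‖ * ‖v‖) ^ 2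
        = ((‖u‖ * ‖v‖) ^ 2 - (inner ℝ u v : ℝ) ^ 2) / (‖u‖ * ‖v‖) ^ 2 by field_simp]
    rw [div_le_div_iff₀ (by positivity) (by positivity)]
    nlinarith [sq_nonneg ‖u‖, sq_nonneg ‖v‖, mul_pos hu hv]
  calc angle u v = arcsin (sin (angle u v)) :=
        (Real.arcsin_sin (by linarith [angle_nonneg u v, Real.pi_pos]) hle2).symm
    _ ≤ arcsin (d / ‖u‖) := Real.monotone_arcsin hsin

lemma inner_circle_formula (x y z : EuclideanSpace ℝ (Fin 2)) (A B C : ℝ)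
    (hx0 : x 0 = cos A) (hx1 : x 1 = sin A) (hy0 : y 0 = cos B) (hy1 : y 1 = sin B)
    (hz0 : z 0 = cos C) (hz1 : z 1 = sin C) :
    (inner ℝ (x - z) (y - z) : ℝ) = Real.cos (A - B) - Real.cos (A - C) - Real.cos (B - C) + 1 := by
  rw [PiLp.inner_apply, Fin.sum_univ_two]
  simp only [PiLp.sub_apply, hx0, hx1, hy0, hy1, hz0, hz1, RCLike.inner_apply, conj_trivial]
  rw [Real.cos_sub, Real.cos_sub, Real.cos_sub]
  linear_combination Real.sin_sq_add_cos_sq C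

/-- If each vertex of a perturbed `n`-gon is within `(1/4) sin² (π/n)` of the corresponding
vertex of the regular `n`-gon inscribed in the unit circle, then each interior angle of the
perturbed polygon is at most `(n-2)π/n + 2 arcsin((1/4) sin(π/n))`, which is `< π`
(so the polygon is convex). -/
theorem stmt_1 (n : ℕ) (hn : 5 ≤ n) (a b : ℕ → EuclideanSpace ℝ (Fin 2))
    (ha0 : ∀ i, a i 0 = Real.cos (2 * i * π / n))
    (ha1 : ∀ i, a i 1 = Real.sin (2 * i * π / n))
    (hbper : ∀ i, b (i + n) = b i)
    (hclose : ∀ i, dist (b i) (a i) ≤ (1 / 4) * Real.sin (π / n) ^ 2) :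
    ((n : ℝ) - 2) * π / n + 2 * Real.arcsin ((1 / 4) * Real.sin (π / n)) < π ∧
    ∀ i, EuclideanGeometry.angle (b (i + n - 1)) (b i) (b (i + 1))
      ≤ ((n : ℝ) - 2) * π / n + 2 * Real.arcsin ((1 / 4) * Real.sin (π / n)) := by
  have hnR : (5:ℝ) ≤ (n:ℝ) := by exact_mod_cast hn
  have hn0 : (0:ℝ) < (n:ℝ) := by linarith
  have hpi := Real.pi_pos
  set ψ : ℝ := π / n with hψdef
  have hψ0 : 0 < ψ := by positivity
  have hψle : ψ ≤ π / 5 := by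
    rw [hψdef, div_le_div_iff₀ hn0 (by norm_num)]
    nlinarith
  have h2ψ : 2 * ψ < π := by linarith
  have hsψ : 0 < sin ψ := Real.sin_pos_of_pos_of_lt_pi hψ0 (by linarith)
  have hsle : sin ψ ≤ 1 := Real.sin_le_one ψ
  set δ : ℝ := arcsin ((1/4) * sin ψ) with hδdef
  have hδlt : δ < ψ := by
    have h1 : (1/4) * sin ψ < sin ψ := by linarith
    calc δ < arcsin (sin ψ) := by
          apply Real.strictMonoOn_arcsin ?_ ?_ h1
          · constructor <;> nlinarith
          · constructor <;> nlinarith [Real.neg_one_le_sin ψ]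
      _ = ψ := Real.arcsin_sin (by linarith) (by linarith)
  have hδ0 : 0 ≤ δ := by
    rw [hδdef]
    exact Real.arcsin_nonneg.mpr (by nlinarith)
  have hnn2 : ((n:ℝ) - 2) * π / n = π - 2 * ψ := by
    rw [hψdef]; field_simp
  refine ⟨by rw [hnn2]; linarith, fun i => ?_⟩
  have hcast : ((i + n - 1 : ℕ) : ℝ) = (i:ℝ) + (n:ℝ) - 1 := by
    rw [Nat.cast_sub (by omega)]; push_cast; ring
  set A : ℝ := 2 * ((i:ℝ) + 1) * π / n with hA
  set T : ℝ := 2 * (i:ℝ) * π / n with hT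
  set C : ℝ := 2 * ((i:ℝ) + (n:ℝ) - 1) * π / n with hC
  have hAT : A - T = 2 * ψ := by rw [hA, hT, hψdef]; field_simp; ring
  have hCT : C - T = 2 * π - 2 * ψ := by rw [hC, hT, hψdef]; field_simp; ring
  have hAC : A - C = 4 * ψ - 2 * π := by rw [hA, hC, hψdef]; field_simp; ring
  have hA0 : a (i+1) 0 = cos A := by rw [ha0 (i+1)]; congr 1; push_cast; ring
  have hA1 : a (i+1) 1 = sin A := by rw [ha1 (i+1)]; congr 1; push_cast; ring
  have hT0 : a i 0 = cos T := by rw [ha0 i]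
  have hT1 : a i 1 = sin T := by rw [ha1 i]
  have hC0 : a (i+n-1) 0 = cos C := by rw [ha0 (i+n-1)]; congr 1; rw [hcast]
  have hC1 : a (i+n-1) 1 = sin C := by rw [ha1 (i+n-1)]; congr 1; rw [hcast]
  set u : EuclideanSpace ℝ (Fin 2) := a (i+1) - a i with hu
  set w : EuclideanSpace ℝ (Fin 2) := a (i+n-1) - a i with hw
  set u' : EuclideanSpace ℝ (Fin 2) := b (i+1) - b i with hu'
  set w' : EuclideanSpace ℝ (Fin 2) := b (i+n-1) - b i with hw'
  have hinner : (inner ℝ u w : ℝ) = Real.cos (4*ψ) - 2 * Real.cos (2*ψ) + 1 := by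
    rw [hu, hw, inner_circle_formula _ _ _ A C T hA0 hA1 hC0 hC1 hT0 hT1,
      hAC, hAT, hCT]
    rw [show (4*ψ - 2*π : ℝ) = 4*ψ - 2*π by ring, Real.cos_sub_two_pi,
      show (2*π - 2*ψ : ℝ) = 2*π - 2*ψ by ring, Real.cos_two_pi_sub]
    ring
  have hnu2 : ‖u‖ ^ 2 = 2 - 2 * Real.cos (2*ψ) := by
    rw [← real_inner_self_eq_norm_sq, hu,
      inner_circle_formula _ _ _ A A T hA0 hA1 hA0 hA1 hT0 hT1, hAT]
    simp only [sub_self, Real.cos_zero]; ring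
  have hnw2 : ‖w‖ ^ 2 = 2 - 2 * Real.cos (2*ψ) := by
    rw [← real_inner_self_eq_norm_sq, hw,
      inner_circle_formula _ _ _ C C T hC0 hC1 hC0 hC1 hT0 hT1, hCT]
    simp only [sub_self, Real.cos_zero, Real.cos_two_pi_sub]; ring
  have hcos2ψ : Real.cos (2*ψ) = 1 - 2 * sin ψ ^ 2 := by
    have h1 := Real.cos_two_mul ψ
    have h2 := Real.sin_sq_add_cos_sq ψ
    linarith [h1, h2]
  have hnu : ‖u‖ = 2 * sin ψ := by
    rw [← Real.sqrt_sq (norm_nonneg u), hnu2, hcos2ψ,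
      show (2:ℝ) - 2*(1 - 2 * sin ψ ^2) = (2 * sin ψ)^2 by ring,
      Real.sqrt_sq (by positivity)]
  have hnw : ‖w‖ = 2 * sin ψ := by
    rw [← Real.sqrt_sq (norm_nonneg w), hnw2, hcos2ψ,
      show (2:ℝ) - 2*(1 - 2 * sin ψ ^2) = (2 * sin ψ)^2 by ring,
      Real.sqrt_sq (by positivity)]
  have hfrac : (inner ℝ u w : ℝ) / (‖u‖ * ‖w‖) = - Real.cos (2*ψ) := by
    rw [hinner, hnu, hnw, div_eq_iff (by positivity)]
    have e1 : Real.cos (4*ψ) = 2 * Real.cos (2*ψ)^2 - 1 := by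
      rw [show (4:ℝ)*ψ = 2*(2*ψ) by ring]; exact Real.cos_two_mul (2*ψ)
    linear_combination e1 + 2 * Real.cos (2*ψ) * hcos2ψ
  have hangle_a : InnerProductGeometry.angle u w = π - 2*ψ := by
    have hca : Real.cos (InnerProductGeometry.angle u w) = - Real.cos (2*ψ) := by
      rw [InnerProductGeometry.cos_angle, hfrac]
    apply Real.injOn_cos ⟨InnerProductGeometry.angle_nonneg u w,
      InnerProductGeometry.angle_le_pi u w⟩ ⟨by linarith, by linarith⟩
    rw [hca, Real.cos_pi_sub]
  -- perturbation bounds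
  have hdu : ‖u' - u‖ ≤ 2 * ((1/4) * sin ψ ^ 2) := by
    have : u' - u = (b (i+1) - a (i+1)) - (b i - a i) := by rw [hu', hu]; abel
    rw [this]
    calc ‖(b (i+1) - a (i+1)) - (b i - a i)‖
        ≤ ‖b (i+1) - a (i+1)‖ + ‖b i - a i‖ := norm_sub_le _ _
      _ ≤ (1/4) * sin ψ ^ 2 + (1/4) * sin ψ ^ 2 := by
          apply add_le_add
          · rw [← dist_eq_norm]; exact hclose (i+1)
          · rw [← dist_eq_norm]; exact hclose i
      _ = 2 * ((1/4) * sin ψ ^ 2) := by ring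
  have hdw : ‖w' - w‖ ≤ 2 * ((1/4) * sin ψ ^ 2) := by
    have : w' - w = (b (i+n-1) - a (i+n-1)) - (b i - a i) := by rw [hw', hw]; abel
    rw [this]
    calc ‖(b (i+n-1) - a (i+n-1)) - (b i - a i)‖
        ≤ ‖b (i+n-1) - a (i+n-1)‖ + ‖b i - a i‖ := norm_sub_le _ _
      _ ≤ (1/4) * sin ψ ^ 2 + (1/4) * sin ψ ^ 2 := by
          apply add_le_add
          · rw [← dist_eq_norm]; exact hclose (i+n-1)
          · rw [← dist_eq_norm]; exact hclose i
      _ = 2 * ((1/4) * sin ψ ^ 2) := by ring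
  have hdlt_u : 2 * ((1/4) * sin ψ ^ 2) < ‖u‖ := by rw [hnu]; nlinarith
  have hdlt_w : 2 * ((1/4) * sin ψ ^ 2) < ‖w‖ := by rw [hnw]; nlinarith
  have hfr : 2 * ((1/4) * sin ψ ^ 2) / (2 * sin ψ) = (1/4) * sin ψ := by
    field_simp
  have hau : InnerProductGeometry.angle u u' ≤ δ := by
    have := angle_perturb hdu hdlt_u
    rwa [hnu, hfr] at this
  have haw : InnerProductGeometry.angle w w' ≤ δ := by
    have := angle_perturb hdw hdlt_w
    rwa [hnw, hfr] at this
  -- assemble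
  have hgoal : EuclideanGeometry.angle (b (i + n - 1)) (b i) (b (i + 1))
      = InnerProductGeometry.angle w' u' := by
    rw [EuclideanGeometry.angle, hw', hu']
    norm_num [vsub_eq_sub]
  rw [hgoal, hnn2]
  calc InnerProductGeometry.angle w' u'
      ≤ InnerProductGeometry.angle w' w + InnerProductGeometry.angle w u' :=
        angle_triangle' w' w u'
    _ ≤ InnerProductGeometry.angle w' w +
        (InnerProductGeometry.angle w u + InnerProductGeometry.angle u u') := by
        linarith [angle_triangle' w u u']
    _ ≤ δ + ((π - 2*ψ) + δ) := by
        rw [InnerProductGeometry.angle_comm w' w] at *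
        rw [InnerProductGeometry.angle_comm w u] at *
        linarith [hangle_a, haw, hau, InnerProductGeometry.angle_comm u w]
    _ = π - 2*ψ + 2*δ := by ring
end

section
/- Let w be the torsion function of a bounded open convex set Ω ⊂ ℝ² (the solution of −Δw = 1 with Dirichlet boundary conditions). Then ‖∇w‖_∞ ≤ diam(Ω)/2. -/
open Real MeasureTheory

set_option maxHeartbeats 1000000
set_option linter.unusedSectionVars false
set_option linter.unusedVariables false

noncomputable abbrev E2 := EuclideanSpace ℝ (Fin 2)

/-- Second directional derivative of `f` at `x` in direction `v`. -/
noncomputable def D2 (f : E2 → ℝ) (x v : E2) : ℝ :=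
  fderiv ℝ (fun y => fderiv ℝ f y v) x v

noncomputable def ee (i : Fin 2) : E2 := EuclideanSpace.single i 1




/-- D2 of a difference of two functions, given differentiability data. -/
lemma D2_sub {f g : E2 → ℝ} {U : Set E2} (hU : IsOpen U) {x : E2} (hx : x ∈ U)
    (hf1 : ∀ y ∈ U, DifferentiableAt ℝ f y) (hg1 : ∀ y ∈ U, DifferentiableAt ℝ g y)
    (v : E2)
    (hf2 : DifferentiableAt ℝ (fun y => fderiv ℝ f y v) x)
    (hg2 : DifferentiableAt ℝ (fun y => fderiv ℝ g y v) x) :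
    D2 (fun y => f y - g y) x v = D2 f x v - D2 g x v := by
  have hev : (fun y => fderiv ℝ (fun z => f z - g z) y v)
      =ᶠ[nhds x] (fun y => fderiv ℝ f y v - fderiv ℝ g y v) := by
    filter_upwards [hU.mem_nhds hx] with y hy
    rw [fderiv_fun_sub (hf1 y hy) (hg1 y hy)]
    rfl
  unfold D2
  rw [Filter.EventuallyEq.fderiv_eq hev, fderiv_fun_sub hf2 hg2]
  rfl

/-- D2 of a quadratic a(By)²+bBy+c in a linear functional. -/
lemma D2_quad (a b c : ℝ) (B : E2 →L[ℝ] ℝ) (x v : E2) :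
    D2 (fun y => a * (B y)^2 + b * B y + c) x v = 2 * a * (B v)^2 := by
  have hder : ∀ y : E2, HasFDerivAt (fun z => a * (B z)^2 + b * B z + c)
      ((2 * a * B y + b) • (B : E2 →L[ℝ] ℝ)) y := by
    intro y
    have h1 : HasFDerivAt (fun z : E2 => B z) B y := B.hasFDerivAt
    have h2 : HasFDerivAt (fun z : E2 => a * (B z)^2 + b * B z + c)
        ((a • (B y • B + B y • B)) + (b • B)) y := by
      have := (((h1.mul h1).const_mul a).add (h1.const_mul b)).add_const c
      refine this.congr_of_eventuallyEq (Filter.Eventually.of_forall fun z => ?_)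
      simp only [Pi.mul_apply, Pi.add_apply]
      ring
    convert h2 using 1
    ext u
    simp [ContinuousLinearMap.smul_apply]
    ring
  have hfd : (fun y => fderiv ℝ (fun z => a * (B z)^2 + b * B z + c) y v)
      = fun y => (2 * a * B y + b) * B v := by
    funext y
    rw [(hder y).fderiv]
    simp [ContinuousLinearMap.smul_apply]
  unfold D2
  rw [hfd]
  have h3 : HasFDerivAt (fun y : E2 => (2 * a * B y + b) * B v)
      ((B v * (2 * a)) • (B : E2 →L[ℝ] ℝ)) x := by
    have : HasFDerivAt (fun y : E2 => (2 * a * B y + b))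
        ((2 * a) • (B : E2 →L[ℝ] ℝ)) x := by
      simpa using ((B.hasFDerivAt (x := x)).const_mul (2*a)).add_const b
    simpa [mul_comm, smul_smul] using this.mul_const (B v)
  rw [h3.fderiv]
  simp [ContinuousLinearMap.smul_apply]
  ring

/-- D2 of a negation. -/
lemma D2_neg (f : E2 → ℝ) (x v : E2) : D2 (fun y => -(f y)) x v = -D2 f x v := by
  unfold D2
  have : (fun y => fderiv ℝ (fun z => -(f z)) y v) = fun y => -(fderiv ℝ f y v) := by
    funext y; rw [fderiv_fun_neg]; rfl
  rw [this]
  have : (fun y => -(fderiv ℝ f y v)) = fun y => -((fun z => fderiv ℝ f z v) y) := rfl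
  rw [this, fderiv_fun_neg]; rfl

/-- D2 of a translate. -/
lemma D2_translate {f : E2 → ℝ} {U : Set E2} (hU : IsOpen U) (hf : ContDiffOn ℝ 2 f U)
    (h : E2) {x : E2} (hx : x + h ∈ U) (v : E2) :
    D2 (fun y => f (y + h)) x v = D2 f (x + h) v := by
  have hτ : ∀ q : E2, HasFDerivAt (fun p : E2 => p + h) (ContinuousLinearMap.id ℝ E2) q :=
    fun q => (hasFDerivAt_id q).add_const h
  have hf1 : ∀ y ∈ U, DifferentiableAt ℝ f y := fun y hy =>
    (hf.differentiableOn (by norm_num)).differentiableAt (hU.mem_nhds hy)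
  have hev : (fun q => fderiv ℝ (fun p => f (p + h)) q v)
      =ᶠ[nhds x] (fun q => fderiv ℝ f (q + h) v) := by
    have hUo : IsOpen {q : E2 | q + h ∈ U} := hU.preimage (continuous_id.add continuous_const)
    filter_upwards [hUo.mem_nhds hx] with q hq
    have h6 : (fun p => f (p + h)) = f ∘ (fun p : E2 => p + h) := rfl
    have := ((hf1 _ hq).hasFDerivAt.comp q (hτ q)).fderiv
    rw [h6, this]
    simp
  unfold D2
  rw [Filter.EventuallyEq.fderiv_eq hev]
  -- now fderiv of (fun q => fderiv f (q+h) v) at x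
  have h1 : ContDiffOn ℝ 1 (fderiv ℝ f) U := hf.fderiv_of_isOpen hU (by norm_num)
  have h2 : DifferentiableAt ℝ (fun y => fderiv ℝ f y v) (x + h) := by
    have h3 : DifferentiableAt ℝ (fderiv ℝ f) (x + h) :=
      (h1.differentiableOn (by norm_num)).differentiableAt (hU.mem_nhds hx)
    exact ((ContinuousLinearMap.apply ℝ ℝ v).differentiableAt).comp _ h3
  have h4 := (h2.hasFDerivAt.comp x (hτ x)).fderiv
  have h5 : (fun q => fderiv ℝ f (q + h) v) = (fun y => fderiv ℝ f y v) ∘ (fun p : E2 => p + h) := rfl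
  rw [h5, h4]
  simp





/-- Key step: at an interior local max of a C² function, D2 in any direction is ≤ 0. -/
lemma D2_nonpos_of_localMax {v : E2 → ℝ} {O : Set E2} (hO : IsOpen O)
    (hv2 : ContDiffOn ℝ 2 v O) {m : E2} (hm : m ∈ O)
    (hmax : ∀ y ∈ O, v y ≤ v m) (e : E2) : D2 v m e ≤ 0 := by
  by_contra hA
  push_neg at hA
  set A := D2 v m e with hAdef
  -- the line map
  set γ : ℝ → E2 := fun t => m + t • e with hγ
  have hγc : Continuous γ := by continuity
  have hγ0 : γ 0 = m := by simp [hγ]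
  have hU : IsOpen (γ ⁻¹' O) := hO.preimage hγc
  have h0U : (0:ℝ) ∈ γ ⁻¹' O := by simp [hγ, hm]
  obtain ⟨δ, hδpos, hδ⟩ := Metric.isOpen_iff.mp hU 0 h0U
  have hball : ∀ t : ℝ, |t| < δ → γ t ∈ O := by
    intro t ht
    exact hδ (by simpa [Real.dist_eq] using ht)
  have hv1 : ∀ y ∈ O, DifferentiableAt ℝ v y := fun y hy =>
    (hv2.differentiableOn (by norm_num)).differentiableAt (hO.mem_nhds hy)
  -- derivative of γ
  have hγd : ∀ t : ℝ, HasDerivAt γ e t := by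
    intro t
    have h := ((hasDerivAt_id t).smul_const e).const_add m
    rw [one_smul] at h
    exact h
  set φ : ℝ → ℝ := fun t => fderiv ℝ v (γ t) e with hφ
  set f : ℝ → ℝ := fun t => v (γ t) with hfdef
  have hfd : ∀ t : ℝ, γ t ∈ O → HasDerivAt f (φ t) t := by
    intro t ht
    exact ((hv1 _ ht).hasFDerivAt).comp_hasDerivAt t (hγd t)
  -- φ has derivative A at 0
  have hgdiff : DifferentiableAt ℝ (fun y => fderiv ℝ v y e) m := by
    have h1 : ContDiffOn ℝ 1 (fderiv ℝ v) O := hv2.fderiv_of_isOpen hO (by norm_num)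
    have h3 : DifferentiableAt ℝ (fderiv ℝ v) m :=
      (h1.differentiableOn (by norm_num)).differentiableAt (hO.mem_nhds hm)
    exact ((ContinuousLinearMap.apply ℝ ℝ e).differentiableAt).comp _ h3
  have hφd : HasDerivAt φ A 0 := by
    have h0 := (hγ0 ▸ hgdiff.hasFDerivAt).comp_hasDerivAt 0 (hγd 0)
    rw [hγ0] at h0
    exact h0
  -- local max of f at 0
  have hlm : IsLocalMax f 0 := by
    filter_upwards [hU.mem_nhds h0U] with t ht
    have := hmax _ ht
    simpa [hfdef, hγ0] using this
  -- f'(0) = 0 hence φ 0 = 0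
  have hφ0 : φ 0 = 0 := hlm.hasDerivAt_eq_zero (hfd 0 h0U)
  -- slope of φ at 0 tends to A > 0: φ positive on a right interval
  have hslope : Filter.Tendsto (slope φ 0) (nhdsWithin 0 {0}ᶜ) (nhds A) :=
    hasDerivAt_iff_tendsto_slope.mp hφd
  have hslope' : Filter.Tendsto (slope φ 0) (nhdsWithin 0 (Set.Ioi 0)) (nhds A) :=
    hslope.mono_left (nhdsWithin_mono 0 (fun t ht => by
      simp only [Set.mem_compl_iff, Set.mem_singleton_iff]
      exact ne_of_gt ht))
  have hev : ∀ᶠ t in nhdsWithin 0 (Set.Ioi 0), 0 < slope φ 0 t :=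
    hslope'.eventually (eventually_gt_nhds hA)
  obtain ⟨u, hu0, huI⟩ := (mem_nhdsGT_iff_exists_Ioo_subset).mp hev
  -- shrink so that also within δ
  set u' : ℝ := min u δ with hu'
  have hu'pos : 0 < u' := lt_min hu0 hδpos
  have hφpos : ∀ t ∈ Set.Ioo (0:ℝ) u', 0 < φ t := by
    intro t ⟨ht0, htu⟩
    have := huI ⟨ht0, lt_of_lt_of_le htu (min_le_left _ _)⟩
    have hsl : 0 < φ t / t := by
      have h2 : slope φ 0 t = t⁻¹ * φ t := by simp [slope, hφ0]
      have h3 := this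
      simp only [Set.mem_setOf_eq] at h3
      rw [h2] at h3
      rw [div_eq_inv_mul]
      exact h3
    exact (div_pos_iff.mp hsl).resolve_right (fun h => absurd ht0 (not_lt.mpr h.2.le)) |>.1
  -- f strictly increasing on [0, u'/... ): use Icc 0 t for t < u'
  have hmono : StrictMonoOn f (Set.Icc 0 (u'/2)) := by
    apply strictMonoOn_of_deriv_pos (convex_Icc _ _)
    · apply ContinuousOn.comp (hv2.continuousOn) hγc.continuousOn
      intro t ⟨ht0, htu⟩
      apply hball
      rw [abs_of_nonneg ht0]
      calc t ≤ u'/2 := htu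
        _ < u' := by linarith
        _ ≤ δ := min_le_right _ _
    · intro t ht
      rw [interior_Icc] at ht
      have htO : γ t ∈ O := by
        apply hball
        rw [abs_of_nonneg ht.1.le]
        calc t < u'/2 := ht.2
          _ < u' := by linarith
          _ ≤ δ := min_le_right _ _
      rw [(hfd t htO).deriv]
      exact hφpos t ⟨ht.1, by linarith [ht.2]⟩
  -- contradiction with local max
  obtain ⟨ρ, hρpos, hρ⟩ := Metric.mem_nhds_iff.mp hlm
  set t0 : ℝ := min (u'/2) (ρ/2) with ht0def
  have ht0pos : 0 < t0 := lt_min (by linarith) (by linarith)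
  have h1 : f 0 < f t0 := hmono ⟨le_refl 0, by positivity⟩
    ⟨ht0pos.le, min_le_left _ _⟩ ht0pos
  have h2 : f t0 ≤ f 0 := by
    have : t0 ∈ Metric.ball (0:ℝ) ρ := by
      simp only [Metric.mem_ball, Real.dist_eq, sub_zero]
      rw [abs_of_pos ht0pos]
      calc t0 ≤ ρ/2 := min_le_right _ _
        _ < ρ := by linarith
    simpa [hγ0] using hρ this
  linarith






lemma diffAt_fderiv_apply {f : E2 → ℝ} {U : Set E2} (hU : IsOpen U) (hf : ContDiffOn ℝ 2 f U)
    {x : E2} (hx : x ∈ U) (v : E2) :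
    DifferentiableAt ℝ (fun y => fderiv ℝ f y v) x := by
  have h1 : ContDiffOn ℝ 1 (fderiv ℝ f) U := hf.fderiv_of_isOpen hU (by norm_num)
  have h2 : DifferentiableAt ℝ (fderiv ℝ f) x :=
    (h1.differentiableOn (by norm_num)).differentiableAt (hU.mem_nhds hx)
  exact ((ContinuousLinearMap.apply ℝ ℝ v).differentiableAt).comp x h2

/-- strict maximum principle -/
lemma strictMP {O : Set E2} (hO : IsOpen O) (hb : Bornology.IsBounded O) {v : E2 → ℝ}
    (hv2 : ContDiffOn ℝ 2 v O) (hvc : ContinuousOn v (closure O))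
    (hsub : ∀ x ∈ O, 0 < D2 v x (ee 0) + D2 v x (ee 1)) {M : ℝ}
    (hM : ∀ z ∈ frontier O, v z ≤ M) : ∀ x ∈ O, v x ≤ M := by
  intro x hx
  have hcomp : IsCompact (closure O) :=
    Metric.isCompact_of_isClosed_isBounded isClosed_closure hb.closure
  obtain ⟨m, hmcl, hmax⟩ := hcomp.exists_isMaxOn ⟨x, subset_closure hx⟩ hvc
  by_cases hmO : m ∈ O
  · exfalso
    have h0 := D2_nonpos_of_localMax hO hv2 hmO
      (fun y hy => hmax (subset_closure hy)) (ee 0)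
    have h1 := D2_nonpos_of_localMax hO hv2 hmO
      (fun y hy => hmax (subset_closure hy)) (ee 1)
    linarith [hsub m hmO]
  · have hmf : m ∈ frontier O := by
      rw [hO.frontier_eq]; exact ⟨hmcl, hmO⟩
    exact le_trans (hmax (subset_closure hx)) (hM m hmf)

noncomputable def qB : E2 →L[ℝ] ℝ := EuclideanSpace.proj (0 : Fin 2)

lemma qB_e0 : qB (ee 0) = 1 := by simp [qB, ee]
lemma qB_e1 : qB (ee 1) = 0 := by simp [qB, ee]

lemma quad_contDiff (a b c : ℝ) (B : E2 →L[ℝ] ℝ) :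
    ContDiff ℝ 2 (fun y => a * (B y)^2 + b * B y + c) := by
  have hB : ContDiff ℝ 2 (fun y : E2 => B y) := B.contDiff
  have : ContDiff ℝ 2 (fun y : E2 => a * (B y * B y) + b * B y + c) :=
    ((contDiff_const.mul (hB.mul hB)).add (contDiff_const.mul hB)).add contDiff_const
  have he : (fun y : E2 => a * (B y)^2 + b * B y + c)
      = (fun y : E2 => a * (B y * B y) + b * B y + c) := by
    funext y; ring
  rw [he]; exact this

lemma quad_fderiv_apply (a b c : ℝ) (B : E2 →L[ℝ] ℝ) (v : E2) :
    (fun y => fderiv ℝ (fun z => a * (B z)^2 + b * B z + c) y v)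
      = fun y => (2 * a * B y + b) * B v := by
  funext y
  have h1 : HasFDerivAt (fun z : E2 => B z) B y := B.hasFDerivAt
  have h2 : HasFDerivAt (fun z : E2 => a * (B z)^2 + b * B z + c)
      ((a • (B y • B + B y • B)) + (b • B)) y := by
    have := (((h1.mul h1).const_mul a).add (h1.const_mul b)).add_const c
    refine this.congr_of_eventuallyEq (Filter.Eventually.of_forall fun z => ?_)
    simp only [Pi.mul_apply, Pi.add_apply]
    ring
  rw [h2.fderiv]
  simp [ContinuousLinearMap.smul_apply]
  ring

lemma quad_fderiv_apply_diff (a b c : ℝ) (B : E2 →L[ℝ] ℝ) (v : E2) (x : E2) :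
    DifferentiableAt ℝ (fun y => fderiv ℝ (fun z => a * (B z)^2 + b * B z + c) y v) x := by
  rw [quad_fderiv_apply]
  fun_prop

/-- maximum principle for Lap = 0 functions -/
lemma MP0 {O : Set E2} (hO : IsOpen O) (hb : Bornology.IsBounded O) {v : E2 → ℝ}
    (hv2 : ContDiffOn ℝ 2 v O) (hvc : ContinuousOn v (closure O))
    (hsub : ∀ x ∈ O, D2 v x (ee 0) + D2 v x (ee 1) = 0) {M : ℝ}
    (hM : ∀ z ∈ frontier O, v z ≤ M) : ∀ x ∈ O, v x ≤ M := by
  intro x hx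
  obtain ⟨r, hr⟩ := hb.closure.subset_closedBall 0
  set R : ℝ := (‖qB‖ * r)^2 with hRdef
  have hR : ∀ y ∈ closure O, (qB y)^2 ≤ R := by
    intro y hy
    have h1 : ‖y‖ ≤ r := by simpa using hr hy
    have h2 : |qB y| ≤ ‖qB‖ * r := by
      calc |qB y| = ‖qB y‖ := rfl
        _ ≤ ‖qB‖ * ‖y‖ := qB.le_opNorm y
        _ ≤ ‖qB‖ * r := by
            exact mul_le_mul_of_nonneg_left h1 (norm_nonneg _)
    calc (qB y)^2 = |qB y|^2 := (sq_abs _).symm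
      _ ≤ (‖qB‖ * r)^2 := by
          apply pow_le_pow_left₀ (abs_nonneg _) h2
  have key : ∀ ε : ℝ, 0 < ε → v x + ε * (qB x)^2 ≤ M + ε * R := by
    intro ε hε
    set g : E2 → ℝ := fun y => (-ε) * (qB y)^2 + 0 * qB y + 0 with hg
    have hgcd : ContDiff ℝ 2 g := quad_contDiff _ _ _ _
    set vε : E2 → ℝ := fun y => v y - g y with hvε
    have hv2' : ContDiffOn ℝ 2 vε O := hv2.sub (hgcd.contDiffOn)
    have hvc' : ContinuousOn vε (closure O) := hvc.sub (hgcd.continuous.continuousOn)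
    have hsub' : ∀ y ∈ O, 0 < D2 vε y (ee 0) + D2 vε y (ee 1) := by
      intro y hy
      have hv1 : ∀ z ∈ O, DifferentiableAt ℝ v z := fun z hz =>
        (hv2.differentiableOn (by norm_num)).differentiableAt (hO.mem_nhds hz)
      have hg1 : ∀ z ∈ O, DifferentiableAt ℝ g z := fun z _ =>
        (hgcd.differentiable (by norm_num)).differentiableAt
      have hD0 := D2_sub hO hy hv1 hg1 (ee 0)
        (diffAt_fderiv_apply hO hv2 hy (ee 0)) (quad_fderiv_apply_diff _ _ _ _ _ _)
      have hD1 := D2_sub hO hy hv1 hg1 (ee 1)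
        (diffAt_fderiv_apply hO hv2 hy (ee 1)) (quad_fderiv_apply_diff _ _ _ _ _ _)
      have hq0 : D2 g y (ee 0) = 2 * (-ε) * (qB (ee 0))^2 := D2_quad _ _ _ _ _ _
      have hq1 : D2 g y (ee 1) = 2 * (-ε) * (qB (ee 1))^2 := D2_quad _ _ _ _ _ _
      rw [qB_e0] at hq0; rw [qB_e1] at hq1
      have := hsub y hy
      simp only [hvε]
      rw [hD0, hD1, hq0, hq1]
      nlinarith
    have hM' : ∀ z ∈ frontier O, vε z ≤ M + ε * R := by
      intro z hz
      have hzc : z ∈ closure O := frontier_subset_closure hz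
      have h1 := hR z hzc
      have h2 := hM z hz
      simp only [hvε, hg]
      nlinarith
    have := strictMP hO hb hv2' hvc' hsub' hM' x hx
    simp only [hvε, hg] at this
    nlinarith
  -- let ε → 0
  have hxR : (qB x)^2 ≤ R := hR x (subset_closure hx)
  by_contra hc
  push_neg at hc
  have hC : 0 ≤ R - (qB x)^2 := by linarith
  set ε := (v x - M) / (R - (qB x)^2 + 1) with hεdef
  have hεpos : 0 < ε := by
    apply div_pos (by linarith) (by linarith)
  have := key ε hεpos
  have h2 : v x ≤ M + ε * (R - (qB x)^2) := by nlinarith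
  have h3 : ε * (R - (qB x)^2) < v x - M := by
    rw [hεdef]
    rw [div_mul_eq_mul_div, div_lt_iff₀ (by linarith)]
    nlinarith
  linarith












section Apps

variable {Ω : Set E2} (hΩo : IsOpen Ω) (hΩb : Bornology.IsBounded Ω) (hΩc : Convex ℝ Ω)
    {w : E2 → ℝ} (hw2 : ContDiffOn ℝ 2 w Ω) (hwc : ContinuousOn w (closure Ω))
    (hw0 : ∀ x ∈ frontier Ω, w x = 0)
    (hpde : ∀ x ∈ Ω, D2 w x (ee 0) + D2 w x (ee 1) = -1)

include hΩo hΩb hw2 hwc hw0 hpde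

/-- nonnegativity of the torsion function -/
lemma w_nonneg : ∀ y ∈ closure Ω, 0 ≤ w y := by
  have hneg : ∀ x ∈ Ω, -w x ≤ 0 := by
    apply strictMP hΩo hΩb hw2.neg hwc.neg
    · intro x hx
      have h0 : D2 (fun y => -(w y)) x (ee 0) = -D2 w x (ee 0) := D2_neg w x (ee 0)
      have h1 : D2 (fun y => -(w y)) x (ee 1) = -D2 w x (ee 1) := D2_neg w x (ee 1)
      have := hpde x hx
      simp only [h0, h1]
      linarith
    · intro z hz
      rw [hw0 z hz]; simp
  intro y hy
  by_cases hyΩ : y ∈ Ω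
  · linarith [hneg y hyΩ]
  · have : y ∈ frontier Ω := by rw [hΩo.frontier_eq]; exact ⟨hy, hyΩ⟩
    rw [hw0 y this]

/-- the barrier estimate -/
lemma w_barrier (hΩc : Convex ℝ Ω) :
    ∀ x ∈ Ω, ∀ ζ ∈ frontier Ω, w x ≤ (Metric.diam Ω / 2) * ‖x - ζ‖ := by
  intro x hx ζ hζ
  set d : ℝ := Metric.diam Ω with hd
  have hd0 : 0 ≤ d := Metric.diam_nonneg
  have hζc : ζ ∈ closure Ω := frontier_subset_closure hζ
  have hζΩ : ζ ∉ Ω := by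
    rw [hΩo.frontier_eq] at hζ; exact hζ.2
  obtain ⟨f, hf⟩ := geometric_hahn_banach_open_point hΩc hΩo hζΩ
  set b : E2 := (InnerProductSpace.toDual ℝ E2).symm f with hbdef
  have hbap : ∀ y : E2, @inner ℝ _ _ b y = f y := fun y =>
    InnerProductSpace.toDual_symm_apply
  have hbne : b ≠ 0 := by
    intro hb0
    have := hf x hx
    rw [← hbap x, ← hbap ζ, hb0] at this
    simp at this
  set e : E2 := (-(‖b‖⁻¹)) • b with hedef
  have hene : ‖e‖ = 1 := by
    rw [hedef, norm_smul]
    simp [norm_ne_zero_iff.mpr hbne, abs_of_pos (inv_pos.mpr (norm_pos_iff.mpr hbne))]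
  set G : E2 →L[ℝ] ℝ := innerSL ℝ e with hGdef
  have hGap : ∀ y : E2, G y = @inner ℝ _ _ e y := fun y => rfl
  -- L y = G y - G ζ  is ≥ 0 on Ω
  have hLpos : ∀ y ∈ Ω, 0 ≤ G y - G ζ := by
    intro y hy
    have h1 : f y < f ζ := hf y hy
    rw [hGap, hGap, hedef]
    rw [inner_smul_left, inner_smul_left]
    simp only [RCLike.conj_to_real, map_neg]
    rw [hbap, hbap]
    have h2 : 0 < ‖b‖⁻¹ := inv_pos.mpr (norm_pos_iff.mpr hbne)
    nlinarith
  have hLcl : ∀ y ∈ closure Ω, 0 ≤ G y - G ζ := by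
    have hcl : IsClosed {y : E2 | 0 ≤ G y - G ζ} :=
      isClosed_le continuous_const ((G.continuous).sub continuous_const)
    exact fun y hy => closure_minimal hLpos hcl hy
  have hLle : ∀ y ∈ closure Ω, G y - G ζ ≤ d := by
    intro y hy
    have h1 : G y - G ζ = @inner ℝ _ _ e (y - ζ) := by
      rw [hGap, hGap, inner_sub_right]
    rw [h1]
    calc @inner ℝ _ _ e (y - ζ) ≤ ‖e‖ * ‖y - ζ‖ := real_inner_le_norm e (y - ζ)
      _ = ‖y - ζ‖ := by rw [hene, one_mul]
      _ = dist y ζ := (dist_eq_norm y ζ).symm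
      _ ≤ Metric.diam (closure Ω) := Metric.dist_le_diam_of_mem hΩb.closure hy hζc
      _ = d := by rw [Metric.diam_closure]
  -- the quadratic barrier
  set c : ℝ := G ζ with hcdef
  set ψ : E2 → ℝ := fun y => (-(1:ℝ)/2) * (G y)^2 + (c + d/2) * G y + (-(c*d + c^2)/2) with hψdef
  have hψeq : ∀ y : E2, ψ y = (G y - c) * (d - (G y - c)) / 2 := by
    intro y; simp only [hψdef]; ring
  -- sum of squares of G on basis = 1
  have hGsq : (G (ee 0))^2 + (G (ee 1))^2 = 1 := by
    have h0 : G (ee 0) = e 0 := by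
      rw [hGap]
      simp [ee, EuclideanSpace.inner_single_right]
    have h1 : G (ee 1) = e 1 := by
      rw [hGap]
      simp [ee, EuclideanSpace.inner_single_right]
    have h2 : ‖e‖^2 = 1 := by rw [hene]; norm_num
    rw [EuclideanSpace.norm_eq] at h2
    rw [Real.sq_sqrt (by positivity)] at h2
    rw [Fin.sum_univ_two] at h2
    rw [h0, h1]
    simpa [sq_abs] using h2
  -- apply MP0 to w - ψ
  have hkey : ∀ y ∈ Ω, w y - ψ y ≤ 0 := by
    apply MP0 hΩo hΩb (hw2.sub (quad_contDiff _ _ _ _).contDiffOn)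
      (hwc.sub (quad_contDiff _ _ _ _).continuous.continuousOn)
    · intro y hy
      have hv1 : ∀ z ∈ Ω, DifferentiableAt ℝ w z := fun z hz =>
        (hw2.differentiableOn (by norm_num)).differentiableAt (hΩo.mem_nhds hz)
      have hg1 : ∀ z ∈ Ω, DifferentiableAt ℝ ψ z := fun z _ =>
        ((quad_contDiff _ _ _ _).differentiable (by norm_num)).differentiableAt
      have hD0 := D2_sub hΩo hy hv1 hg1 (ee 0)
        (diffAt_fderiv_apply hΩo hw2 hy (ee 0)) (quad_fderiv_apply_diff _ _ _ _ _ _)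
      have hD1 := D2_sub hΩo hy hv1 hg1 (ee 1)
        (diffAt_fderiv_apply hΩo hw2 hy (ee 1)) (quad_fderiv_apply_diff _ _ _ _ _ _)
      have hq0 : D2 ψ y (ee 0) = 2 * (-(1:ℝ)/2) * (G (ee 0))^2 := D2_quad _ _ _ _ _ _
      have hq1 : D2 ψ y (ee 1) = 2 * (-(1:ℝ)/2) * (G (ee 1))^2 := D2_quad _ _ _ _ _ _
      have hp := hpde y hy
      show D2 (fun y => w y - ψ y) y (ee 0) + D2 (fun y => w y - ψ y) y (ee 1) = 0
      rw [hD0, hD1, hq0, hq1]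
      nlinarith [hGsq]
    · intro z hz
      have hzc : z ∈ closure Ω := frontier_subset_closure hz
      show w z - ψ z ≤ 0
      rw [hw0 z hz]
      have h1 := hLcl z hzc
      have h2 := hLle z hzc
      rw [hψeq z]
      nlinarith
  have h3 := hkey x hx
  have h4 : ψ x ≤ (d/2) * (G x - c) := by
    rw [hψeq x]
    have h5 := hLpos x hx
    have h6 := hLle x (subset_closure hx)
    nlinarith
  have h7 : G x - c ≤ ‖x - ζ‖ := by
    have h1 : G x - c = @inner ℝ _ _ e (x - ζ) := by
      rw [hcdef, hGap, hGap, inner_sub_right]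
    rw [h1]
    calc @inner ℝ _ _ e (x - ζ) ≤ ‖e‖ * ‖x - ζ‖ := real_inner_le_norm e (x - ζ)
      _ = ‖x - ζ‖ := by rw [hene, one_mul]
  have h8 : 0 ≤ G x - c := hLpos x hx
  have h9 := mul_le_mul_of_nonneg_left h7 (by linarith : (0:ℝ) ≤ d/2)
  calc w x ≤ ψ x := by linarith
    _ ≤ d/2 * (G x - c) := h4
    _ ≤ d/2 * ‖x - ζ‖ := h9

end Apps







section Apps

variable {Ω : Set E2} (hΩo : IsOpen Ω) (hΩb : Bornology.IsBounded Ω)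
    {w : E2 → ℝ} (hw2 : ContDiffOn ℝ 2 w Ω) (hwc : ContinuousOn w (closure Ω))
    (hw0 : ∀ x ∈ frontier Ω, w x = 0)
    (hpde : ∀ x ∈ Ω, D2 w x (ee 0) + D2 w x (ee 1) = -1)


include hΩo hΩb hw2 hwc hw0 hpde

lemma w_lip (hnn : ∀ y ∈ closure Ω, 0 ≤ w y)
    (hbar : ∀ x ∈ Ω, ∀ ζ ∈ frontier Ω, w x ≤ (Metric.diam Ω / 2) * ‖x - ζ‖) :
    ∀ x ∈ Ω, ∀ y ∈ Ω, w x - w y ≤ (Metric.diam Ω / 2) * ‖x - y‖ := by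
  intro x hx y hy
  set d : ℝ := Metric.diam Ω with hd
  have hd0 : 0 ≤ d := Metric.diam_nonneg
  set h : E2 := x - y with hh
  set T : Set E2 := {p : E2 | p + h ∈ Ω} with hT
  have hTo : IsOpen T := hΩo.preimage (continuous_id.add continuous_const)
  set O : Set E2 := Ω ∩ T with hO
  have hOo : IsOpen O := hΩo.inter hTo
  have hOb : Bornology.IsBounded O := hΩb.subset Set.inter_subset_left
  have hyO : y ∈ O := by
    constructor
    · exact hy
    · show y + h ∈ Ω
      rw [hh]
      rwa [add_sub_cancel]
  -- regularity of the translate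
  have hτcd : ContDiff ℝ 2 (fun p : E2 => p + h) := contDiff_id.add contDiff_const
  have hwτ2 : ContDiffOn ℝ 2 (fun p => w (p + h)) T :=
    hw2.comp hτcd.contDiffOn (fun p hp => hp)
  have hv2 : ContDiffOn ℝ 2 (fun p => w (p + h) - w p) O :=
    (hwτ2.mono Set.inter_subset_right).sub (hw2.mono Set.inter_subset_left)
  -- continuity on closure
  have hclO : closure O ⊆ closure Ω ∩ {p : E2 | p + h ∈ closure Ω} := by
    apply closure_minimal ?_ (isClosed_closure.inter
      (IsClosed.preimage (continuous_id.add continuous_const) isClosed_closure))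
    intro p hp
    exact ⟨subset_closure hp.1, subset_closure hp.2⟩
  have hvc : ContinuousOn (fun p => w (p + h) - w p) (closure O) := by
    apply ContinuousOn.sub
    · apply (hwc.comp (continuous_id.add continuous_const).continuousOn
        (fun p hp => (hclO hp).2)).mono (le_refl _)
    · exact hwc.mono (fun p hp => (hclO hp).1)
  -- Lap = 0
  have hsub : ∀ p ∈ O, D2 (fun q => w (q + h) - w q) p (ee 0)
      + D2 (fun q => w (q + h) - w q) p (ee 1) = 0 := by
    intro p hp
    have hw1 : ∀ z ∈ O, DifferentiableAt ℝ w z := fun z hz =>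
      (hw2.differentiableOn (by norm_num)).differentiableAt (hΩo.mem_nhds hz.1)
    have hwτ1 : ∀ z ∈ O, DifferentiableAt ℝ (fun q => w (q + h)) z := fun z hz =>
      ((hwτ2.differentiableOn (by norm_num)).differentiableAt (hTo.mem_nhds hz.2))
    have hD : ∀ v : E2, D2 (fun q => w (q + h) - w q) p v
        = D2 w (p + h) v - D2 w p v := by
      intro v
      rw [D2_sub hOo hp hwτ1 hw1 v
        (diffAt_fderiv_apply hTo hwτ2 hp.2 v)
        (diffAt_fderiv_apply hΩo hw2 hp.1 v)]
      rw [D2_translate hΩo hw2 h hp.2 v]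
    rw [hD (ee 0), hD (ee 1)]
    have h1 := hpde (p + h) hp.2
    have h2 := hpde p hp.1
    linarith
  -- boundary bound
  have hM : ∀ z ∈ frontier O, w (z + h) - w z ≤ (d/2) * ‖h‖ := by
    intro z hz
    have hznO : z ∉ O := by
      rw [hOo.frontier_eq] at hz; exact hz.2
    have hzc := hclO (frontier_subset_closure hz)
    have hz1 : z ∈ closure Ω := hzc.1
    have hz2 : z + h ∈ closure Ω := hzc.2
    have hMnn : 0 ≤ (d/2) * ‖h‖ := by positivity
    by_cases hzΩ : z ∈ Ω
    · -- then z + h ∉ Ω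
      have hzh : z + h ∉ Ω := fun hc => hznO ⟨hzΩ, hc⟩
      have hzhf : z + h ∈ frontier Ω := by rw [hΩo.frontier_eq]; exact ⟨hz2, hzh⟩
      rw [hw0 _ hzhf]
      have := hnn z hz1
      linarith
    · have hzf : z ∈ frontier Ω := by rw [hΩo.frontier_eq]; exact ⟨hz1, hzΩ⟩
      rw [hw0 _ hzf]
      by_cases hzh : z + h ∈ Ω
      · have := hbar (z + h) hzh z hzf
        have he : z + h - z = h := by abel
        rw [he] at this
        linarith
      · have hzhf : z + h ∈ frontier Ω := by rw [hΩo.frontier_eq]; exact ⟨hz2, hzh⟩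
        rw [hw0 _ hzhf]
        linarith
  have := MP0 hOo hOb hv2 hvc hsub hM y hyO
  have he : y + h = x := by rw [hh]; abel
  rw [he] at this
  have hn : ‖h‖ = ‖x - y‖ := by rw [hh]
  rw [hn] at this
  exact this

/-- main theorem body -/
lemma main_bound (hnn : ∀ y ∈ closure Ω, 0 ≤ w y)
    (hlip : ∀ x ∈ Ω, ∀ y ∈ Ω, w x - w y ≤ (Metric.diam Ω / 2) * ‖x - y‖) :
    ∀ x ∈ Ω, ‖gradient w x‖ ≤ Metric.diam Ω / 2 := by
  intro x hx
  set d : ℝ := Metric.diam Ω with hd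
  have hd0 : 0 ≤ d := Metric.diam_nonneg
  have hg : ‖gradient w x‖ = ‖fderiv ℝ w x‖ := by
    rw [gradient]
    exact LinearIsometryEquiv.norm_map _ _
  rw [hg]
  apply norm_fderiv_le_of_lip' ℝ (by positivity)
  filter_upwards [hΩo.mem_nhds hx] with z hz
  rw [Real.norm_eq_abs, abs_le]
  constructor
  · have := hlip x hx z hz
    rw [norm_sub_rev] at this
    linarith
  · have := hlip z hz x hx
    linarith

end Apps

/-- The torsion function `w` of a bounded open convex set `Ω ⊂ ℝ²` (solution of `-Δw = 1`
with Dirichlet boundary conditions) satisfies `‖∇w‖_∞ ≤ diam Ω / 2`. -/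
theorem stmt_8 (Ω : Set (EuclideanSpace ℝ (Fin 2)))
    (hΩo : IsOpen Ω) (hΩb : Bornology.IsBounded Ω) (hΩc : Convex ℝ Ω)
    (w : EuclideanSpace ℝ (Fin 2) → ℝ)
    (hw2 : ContDiffOn ℝ 2 w Ω)
    (hwc : ContinuousOn w (closure Ω))
    (hw0 : ∀ x ∈ frontier Ω, w x = 0)
    (hpde : ∀ x ∈ Ω,
      fderiv ℝ (fun y => fderiv ℝ w y (EuclideanSpace.single 0 1)) x (EuclideanSpace.single 0 1)
        + fderiv ℝ (fun y => fderiv ℝ w y (EuclideanSpace.single 1 1)) x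
            (EuclideanSpace.single 1 1) = -1) :
    ∀ x ∈ Ω, ‖gradient w x‖ ≤ Metric.diam Ω / 2 := by
  have hpde' : ∀ x ∈ Ω, D2 w x (ee 0) + D2 w x (ee 1) = -1 := by
    intro x hx
    exact hpde x hx
  have hnn : ∀ y ∈ closure Ω, 0 ≤ w y :=
    w_nonneg hΩo hΩb hw2 hwc hw0 hpde'
  have hbar : ∀ x ∈ Ω, ∀ ζ ∈ frontier Ω, w x ≤ (Metric.diam Ω / 2) * ‖x - ζ‖ :=
    w_barrier hΩo hΩb hw2 hwc hw0 hpde' hΩc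
  have hlip := w_lip hΩo hΩb hw2 hwc hw0 hpde' hnn hbar
  exact main_bound hΩo hΩb hw2 hwc hw0 hpde' hnn hlip
end

section
/- Let M be a real symmetric 2n × 2n matrix with exactly four zero eigenvalues whose kernel is spanned by four vectors v₁, v₂, v₃, v₄, and suppose the remaining 2n − 4 eigenvalues of M are strictly positive. If the projections of v₁, v₂, v₃, v₄ onto the last 4 coordinates are linearly independent in ℝ⁴, then the (2n−4) × (2n−4) principal submatrix of M obtained by deleting the last four rows and columns is positive definite. -/
open Matrix


/-- Let `M` be a real symmetric `2n × 2n` positive semidefinite matrix whose kernel is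
spanned by four linearly independent vectors `v 0, ..., v 3` (so `M` has exactly four zero
eigenvalues and `2n - 4` strictly positive ones). If the projections of the `v i` onto the
last four coordinates are linearly independent in `ℝ⁴`, then the `(2n-4) × (2n-4)` principal
submatrix of `M` obtained by deleting the last four rows and columns is positive definite. -/
theorem stmt_15 (n : ℕ) (hn : 3 ≤ n)
    (M : Matrix (Fin (2 * n)) (Fin (2 * n)) ℝ) (hsymm : M.IsSymm)
    (hpsd : M.PosSemidef)
    (v : Fin 4 → (Fin (2 * n) → ℝ))
    (hindep : LinearIndependent ℝ v)
    (hker : LinearMap.ker (Matrix.toLin' M) = Submodule.span ℝ (Set.range v))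
    (hproj : LinearIndependent ℝ
      (fun i : Fin 4 => fun j : Fin 4 =>
        v i ⟨2 * n - 4 + j.val, by have := j.isLt; omega⟩)) :
    (M.submatrix
      (fun i : Fin (2 * n - 4) => (⟨i.val, by have := i.isLt; omega⟩ : Fin (2 * n)))
      (fun i : Fin (2 * n - 4) => (⟨i.val, by have := i.isLt; omega⟩ : Fin (2 * n)))).PosDef := by
  have hsum : ∀ g : Fin (2*n) → ℝ, (∀ a : Fin (2*n), ¬ (a.val < 2*n-4) → g a = 0) →
      ∑ a : Fin (2*n), g a = ∑ i : Fin (2*n-4), g ⟨i.val, by omega⟩ := by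
    intro g hg
    have h : 2*n = (2*n-4) + 4 := by omega
    rw [← (finCongr h.symm).sum_comp, Fin.sum_univ_add]
    have hz : ∀ j : Fin 4, g (finCongr h.symm (Fin.natAdd (2*n-4) j)) = 0 := by
      intro j
      apply hg
      simp only [finCongr_apply, Fin.coe_cast, Fin.coe_natAdd]
      omega
    simp only [hz, Finset.sum_const_zero, add_zero]
    rfl
  set f : Fin (2*n-4) → Fin (2*n) := fun i => (⟨i.val, by omega⟩ : Fin (2*n)) with hf
  show (M.submatrix f f).PosDef
  refine Matrix.PosDef.of_dotProduct_mulVec_pos (hpsd.1.submatrix f) ?_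
  intro x hx
  set y : Fin (2*n) → ℝ := fun a => if h : a.val < 2*n-4 then x ⟨a.val, h⟩ else 0 with hy
  have hyz : ∀ a : Fin (2*n), ¬ (a.val < 2*n-4) → y a = 0 := fun a h => dif_neg h
  have hyf : ∀ i : Fin (2*n-4), y (f i) = x i := by
    intro i
    simp only [hy, hf]
    rw [dif_pos i.isLt]
  have hyf' : ∀ (j : Fin (2*n-4)) (h : (j:ℕ) < 2*n), y ⟨(j:ℕ), h⟩ = x j := by
    intro j h
    simp only [hy]
    rw [dif_pos j.isLt]
  have inner : ∀ a : Fin (2*n), ∑ b, M a b * y b = ∑ j : Fin (2*n-4), M a (f j) * x j := by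
    intro a
    rw [hsum (fun b => M a b * y b) (fun b hb => by
      show M a b * y b = 0
      rw [hyz b hb, mul_zero])]
    refine Finset.sum_congr rfl fun j _ => ?_
    simp only [hyf']
    rfl
  have hquad : dotProduct y (M.mulVec y) = dotProduct x ((M.submatrix f f).mulVec x) := by
    simp only [dotProduct, Matrix.mulVec, Matrix.submatrix_apply]
    rw [hsum (fun a => y a * ∑ b, M a b * y b) (fun a ha => by
      show y a * _ = 0
      rw [hyz a ha, zero_mul])]
    refine Finset.sum_congr rfl fun i _ => ?_
    simp only [hyf', inner]
    rfl
  have hnn := hpsd.dotProduct_mulVec_nonneg y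
  rw [star_trivial] at hnn
  rcases hnn.lt_or_eq with hlt | heq
  · rw [hquad] at hlt
    rwa [star_trivial]
  · exfalso
    have hMy : M *ᵥ y = 0 := (hpsd.dotProduct_mulVec_zero_iff y).mp (by rw [star_trivial]; exact heq.symm)
    have hymem : y ∈ LinearMap.ker (Matrix.toLin' M) := by
      rw [LinearMap.mem_ker, Matrix.toLin'_apply, hMy]
    rw [hker] at hymem
    obtain ⟨c, hc⟩ := (Submodule.mem_span_range_iff_exists_fun ℝ).mp hymem
    have hcomb : ∑ i : Fin 4, c i • (fun j : Fin 4 =>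
        v i ⟨2 * n - 4 + j.val, by have := j.isLt; omega⟩) = 0 := by
      funext j
      have hlt : 2*n-4+j.val < 2*n := by have := j.isLt; omega
      have hyj : y ⟨2*n-4+j.val, hlt⟩ = 0 := hyz _ (by show ¬ (2*n-4+j.val < 2*n-4); omega)
      have h2 := congrFun hc ⟨2*n-4+j.val, hlt⟩
      simp only [Finset.sum_apply, Pi.smul_apply, smul_eq_mul] at h2
      simp only [Finset.sum_apply, Pi.smul_apply, smul_eq_mul, Pi.zero_apply]
      rw [h2]
      exact hyj
    have hc0 : ∀ i, c i = 0 := Fintype.linearIndependent_iff.mp hproj c hcomb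
    have hy0 : y = 0 := by
      rw [← hc]
      simp [hc0]
    apply hx
    funext i
    rw [← hyf i, hy0]
    rfl
end
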